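/- For every natural number n ≥ 1 and every pair of natural numbers l, m with l + m = n, the inequality (n!)²·l! / ((2l)!·(n+m)!) ≤ (e³/(2√2·π))·(1/2^(2l))·n^(2n+1/2)/(l^l·(n+m)^(n+m)) holds, where powers with real exponents are interpreted via exp·log and 0^0 = 1. -/

import Mathlib

open Real Stirling Filter

lemma sqrtpi_le_stirlingSeq (n : ℕ) (hn : 1 ≤ n) : Real.sqrt π ≤ stirlingSeq n := by
  obtain ⟨k, rfl⟩ := Nat.exists_eq_add_of_le hn
  have ht : Tendsto (stirlingSeq ∘ Nat.succ) atTop (nhds (Real.sqrt π)) :=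
    tendsto_stirlingSeq_sqrt_pi.comp (tendsto_add_atTop_nat 1)
  have := stirlingSeq'_antitone.le_of_tendsto ht k
  simpa [Nat.succ_eq_add_one, Nat.add_comm] using this

lemma stirlingSeq_le (n : ℕ) (hn : 1 ≤ n) : stirlingSeq n ≤ Real.exp 1 / Real.sqrt 2 := by
  obtain ⟨k, rfl⟩ := Nat.exists_eq_add_of_le hn
  have := stirlingSeq'_antitone (Nat.zero_le k)
  simpa [Nat.succ_eq_add_one, Nat.add_comm, stirlingSeq_one] using this

lemma fact_eq (n : ℕ) (hn : 1 ≤ n) :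
    (n.factorial : ℝ) = stirlingSeq n * (Real.sqrt (2*n) * ((n:ℝ)/Real.exp 1)^n) := by
  have hn0 : 0 < (n:ℝ) := by exact_mod_cast hn
  rw [stirlingSeq, div_mul_cancel₀]
  positivity

lemma fact_upper (n : ℕ) (hn : 1 ≤ n) :
    (n.factorial : ℝ) ≤ Real.exp 1 / Real.sqrt 2 * (Real.sqrt (2*n) * ((n:ℝ)/Real.exp 1)^n) := by
  have hn0 : 0 < (n:ℝ) := by exact_mod_cast hn
  rw [fact_eq n hn]
  have : (0:ℝ) ≤ Real.sqrt (2*n) * ((n:ℝ)/Real.exp 1)^n := by positivity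
  exact mul_le_mul_of_nonneg_right (stirlingSeq_le n hn) this

lemma fact_lower (n : ℕ) (hn : 1 ≤ n) :
    Real.sqrt π * (Real.sqrt (2*n) * ((n:ℝ)/Real.exp 1)^n) ≤ (n.factorial : ℝ) := by
  have hn0 : 0 < (n:ℝ) := by exact_mod_cast hn
  rw [fact_eq n hn]
  have : (0:ℝ) ≤ Real.sqrt (2*n) * ((n:ℝ)/Real.exp 1)^n := by positivity
  exact mul_le_mul_of_nonneg_right (sqrtpi_le_stirlingSeq n hn) this

theorem stirling_summand_bound (n : ℕ) (hn : 1 ≤ n) (l m : ℕ) (h : l + m = n) :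
    ((n.factorial : ℝ) ^ 2 * (l.factorial : ℝ)) /
        (((2 * l).factorial : ℝ) * ((n + m).factorial : ℝ)) ≤
      Real.exp 3 / (2 * Real.sqrt 2 * Real.pi) * (1 / (2 : ℝ) ^ (2 * l)) *
        ((n : ℝ) ^ (2 * (n : ℝ) + 1/2) / ((l : ℝ) ^ l * ((n : ℝ) + (m : ℝ)) ^ (n + m))) := by
  subst h
  have hE : (0:ℝ) < Real.exp 1 := Real.exp_pos 1
  have hNpos : (0:ℝ) < ((l+m:ℕ):ℝ) := by exact_mod_cast hn
  -- rewrite the rpow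
  have hr : ((l+m:ℕ):ℝ) ^ (2 * ((l+m:ℕ):ℝ) + 1/2) =
      ((l+m:ℕ):ℝ) ^ (2*(l+m)) * Real.sqrt ((l+m:ℕ):ℝ) := by
    rw [Real.rpow_add hNpos, Real.sqrt_eq_rpow]
    congr 1
    rw [show (2 * ((l+m:ℕ):ℝ)) = ((2*(l+m):ℕ):ℝ) by push_cast; ring, Real.rpow_natCast]
  rcases Nat.eq_zero_or_pos l with rfl | hl
  · have hm : 1 ≤ m := by omega
    simp only [Nat.zero_add, Nat.mul_zero, Nat.factorial_zero, pow_zero, Nat.cast_zero,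
      Nat.cast_one, mul_one, one_mul, zero_add] at hr ⊢
    rw [hr]
    have hmm : 1 ≤ m + m := by omega
    have hmp : (0:ℝ) < (m:ℝ) := by exact_mod_cast hm
    have hmmp : (0:ℝ) < ((m+m:ℕ):ℝ) := by exact_mod_cast hmm
    have hD0 : 0 < Real.sqrt π * (Real.sqrt (2*((m+m:ℕ):ℝ)) * (((m+m:ℕ):ℝ)/Real.exp 1)^(m+m)) := by
      positivity
    have hEge : Real.sqrt 2 * Real.sqrt π ≤ Real.exp 1 := by
      nlinarith [Real.sq_sqrt (by norm_num : (0:ℝ) ≤ 2), Real.sq_sqrt Real.pi_pos.le,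
        Real.pi_lt_d2, Real.exp_one_gt_d9, Real.sqrt_nonneg (2:ℝ), Real.sqrt_nonneg π,
        Real.exp_pos 1]
    calc ((m.factorial:ℝ)) ^ 2 / ((m + m).factorial : ℝ)
        ≤ (Real.exp 1/Real.sqrt 2 * (Real.sqrt (2*(m:ℝ)) * ((m:ℝ)/Real.exp 1)^m))^2 /
            (Real.sqrt π * (Real.sqrt (2*((m+m:ℕ):ℝ)) * (((m+m:ℕ):ℝ)/Real.exp 1)^(m+m))) := by
          apply div_le_div₀ (by positivity)
            (pow_le_pow_left₀ (by positivity) (fact_upper m hm) 2) hD0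
            (fact_lower (m+m) hmm)
      _ = (Real.sqrt 2 * Real.sqrt π / Real.exp 1) *
            (Real.exp 3 / (2 * Real.sqrt 2 * Real.pi) * (1 / 1) *
              ((m:ℝ) ^ (2*m) * Real.sqrt (m:ℝ) / ((m:ℝ) + (m:ℝ)) ^ (m + m))) := by
          have h4m : Real.sqrt (2*((m+m:ℕ):ℝ)) = 2 * Real.sqrt (m:ℝ) := by
            rw [show 2*((m+m:ℕ):ℝ) = 2^2 * (m:ℝ) by push_cast; ring,
              Real.sqrt_mul (by positivity), Real.sqrt_sq (by norm_num)]
          have hsqm : Real.sqrt (2*(m:ℝ)) = Real.sqrt 2 * Real.sqrt (m:ℝ) :=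
            Real.sqrt_mul (by norm_num) _
          have hE3 : Real.exp 3 = Real.exp 1 ^ 3 := by rw [Real.exp_one_pow]; norm_num
          rw [h4m, hsqm, hE3]
          generalize Real.exp 1 = E at hE ⊢
          push_cast
          field_simp
          ring_nf
          rw [Real.sq_sqrt Real.pi_pos.le]
      _ ≤ 1 * (Real.exp 3 / (2 * Real.sqrt 2 * Real.pi) * (1 / 1) *
              ((m:ℝ) ^ (2*m) * Real.sqrt (m:ℝ) / ((m:ℝ) + (m:ℝ)) ^ (m + m))) := by
          apply mul_le_mul_of_nonneg_right _ (by positivity)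
          rw [div_le_one hE]
          exact hEge
      _ = Real.exp 3 / (2 * Real.sqrt 2 * Real.pi) * (1 / 1) *
            ((m:ℝ) ^ (2*m) * Real.sqrt (m:ℝ) / ((m:ℝ) + (m:ℝ)) ^ (m + m)) := one_mul _
  · -- l ≥ 1 case
    have hlm : 1 ≤ (l + m) + m := by omega
    have h2l : 1 ≤ 2 * l := by omega
    have ha : (0:ℝ) < (l:ℝ) := by exact_mod_cast hl
    have hb : (0:ℝ) ≤ (m:ℝ) := by positivity
    have h2lpos : (0:ℝ) < ((2*l:ℕ):ℝ) := by exact_mod_cast h2l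
    have hlmm : (0:ℝ) < (((l+m)+m:ℕ):ℝ) := by exact_mod_cast hlm
    have hDpos : 0 < (Real.sqrt π * (Real.sqrt (2*((2*l:ℕ):ℝ)) * (((2*l:ℕ):ℝ)/Real.exp 1)^(2*l)))
        * (Real.sqrt π * (Real.sqrt (2*((((l+m)+m:ℕ)):ℝ)) * (((((l+m)+m:ℕ)):ℝ)/Real.exp 1)^((l+m)+m))) := by
      positivity
    calc ((((l+m).factorial:ℝ)) ^ 2 * (l.factorial : ℝ)) /
        (((2 * l).factorial : ℝ) * (((l+m) + m).factorial : ℝ))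
        ≤ ((Real.exp 1/Real.sqrt 2 * (Real.sqrt (2*((l+m:ℕ):ℝ)) * (((l+m:ℕ):ℝ)/Real.exp 1)^(l+m)))^2
            * (Real.exp 1/Real.sqrt 2 * (Real.sqrt (2*(l:ℝ)) * ((l:ℝ)/Real.exp 1)^l))) /
          ((Real.sqrt π * (Real.sqrt (2*((2*l:ℕ):ℝ)) * (((2*l:ℕ):ℝ)/Real.exp 1)^(2*l)))
            * (Real.sqrt π * (Real.sqrt (2*((((l+m)+m:ℕ)):ℝ)) * (((((l+m)+m:ℕ)):ℝ)/Real.exp 1)^((l+m)+m)))) := by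
          apply div_le_div₀ (by positivity)
          · exact mul_le_mul (pow_le_pow_left₀ (by positivity) (fact_upper (l+m) hn) 2)
              (fact_upper l hl) (by positivity) (by positivity)
          · exact hDpos
          · exact mul_le_mul (fact_lower (2*l) h2l) (fact_lower ((l+m)+m) hlm)
              (by positivity) (by positivity)
      _ = Real.exp 3 / (2 * Real.sqrt 2 * Real.pi) * (1 / (2 : ℝ) ^ (2 * l)) *
            ((((l+m:ℕ)):ℝ) ^ (2*(l+m)) * (((l+m:ℕ):ℝ) / Real.sqrt ((((l+m)+m:ℕ)):ℝ))
              / ((l : ℝ) ^ l * (((l:ℝ) + m) + m) ^ ((l+m) + m))) := by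
          have hs2 : Real.sqrt 2 * Real.sqrt 2 = 2 := Real.mul_self_sqrt (by norm_num)
          have hsp : Real.sqrt π * Real.sqrt π = π := Real.mul_self_sqrt Real.pi_pos.le
          have hsl : Real.sqrt (l:ℝ) * Real.sqrt (l:ℝ) = (l:ℝ) := Real.mul_self_sqrt ha.le
          have hsN : Real.sqrt (2*((l+m:ℕ):ℝ)) ^ 2 = 2*((l+m:ℕ):ℝ) :=
            Real.sq_sqrt (by positivity)
          have h4l : Real.sqrt (2*((2*l:ℕ):ℝ)) = 2 * Real.sqrt (l:ℝ) := by
            rw [show 2*((2*l:ℕ):ℝ) = 2^2 * (l:ℝ) by push_cast; ring,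
              Real.sqrt_mul (by positivity), Real.sqrt_sq (by norm_num)]
          have hnm2 : Real.sqrt (2*((((l+m)+m:ℕ)):ℝ)) =
              Real.sqrt 2 * Real.sqrt ((((l+m)+m:ℕ)):ℝ) := Real.sqrt_mul (by norm_num) _
          have hsnm : (0:ℝ) < Real.sqrt ((((l+m)+m:ℕ)):ℝ) := Real.sqrt_pos.2 hlmm
          have hslp : (0:ℝ) < Real.sqrt (l:ℝ) := Real.sqrt_pos.2 ha
          have hs2p : (0:ℝ) < Real.sqrt 2 := by positivity
          have hE3 : Real.exp 3 = Real.exp 1 ^ 3 := by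
            rw [Real.exp_one_pow]; norm_num
          have hsqN : Real.sqrt (2*((l+m:ℕ):ℝ)) = Real.sqrt 2 * Real.sqrt ((l+m:ℕ):ℝ) :=
            Real.sqrt_mul (by norm_num) _
          have hsql2 : Real.sqrt (2*(l:ℝ)) = Real.sqrt 2 * Real.sqrt (l:ℝ) :=
            Real.sqrt_mul (by norm_num) _
          rw [h4l, hnm2, hE3, hsqN, hsql2]
          generalize Real.exp 1 = E at hE ⊢
          push_cast
          field_simp
          ring_nf
          rw [Real.sq_sqrt (by positivity : (0:ℝ) ≤ (l:ℝ)+(m:ℝ)), Real.sq_sqrt Real.pi_pos.le]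
          have e1 : ∀ a b : ℝ, a*E⁻¹ + b*E⁻¹ = (a+b)*E⁻¹ := fun a b => by ring
          have e2 : ∀ a b : ℝ, a*E⁻¹ + b*E⁻¹*2 = (a+b*2)*E⁻¹ := fun a b => by ring
          simp only [e1, e2, mul_pow]
          ring
      _ ≤ Real.exp 3 / (2 * Real.sqrt 2 * Real.pi) * (1 / (2 : ℝ) ^ (2 * l)) *
            ((((l+m:ℕ)):ℝ) ^ (2 * (((l+m:ℕ)):ℝ) + 1/2) / ((l : ℝ) ^ l * ((((l+m:ℕ)):ℝ) + (m : ℝ)) ^ ((l+m) + m))) := by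
          rw [hr]
          have key : ((l+m:ℕ):ℝ) / Real.sqrt ((((l+m)+m:ℕ)):ℝ) ≤ Real.sqrt ((l+m:ℕ):ℝ) := by
            rw [div_le_iff₀ (Real.sqrt_pos.2 hlmm)]
            nth_rewrite 1 [← Real.mul_self_sqrt hNpos.le]
            refine mul_le_mul_of_nonneg_left ?_ (Real.sqrt_nonneg _)
            exact Real.sqrt_le_sqrt (by exact_mod_cast Nat.le_add_right (l+m) m)
          push_cast at key ⊢
          gcongr
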